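/- Let γ ≥ 1 and n ≥ 1 be natural numbers, and suppose a finite set of n elements is partitioned into an ordered sequence of nonempty blocks B₁, ..., B_m such that for every index i, either |B_i| > n/γ (as reals), or i = m, or |B_{i+1}| > n/γ. Then m ≤ 2γ. -/

import Mathlib

theorem super_layer_count (n γ m : ℕ) (hγ : 1 ≤ γ) (hn : 1 ≤ n)
    (B : Fin m → Finset (Fin n))
    (hne : ∀ i, (B i).Nonempty)
    (hdisj : ∀ i j, i ≠ j → Disjoint (B i) (B j))
    (hcover : ∀ x : Fin n, ∃ i, x ∈ B i)
    (hthick : ∀ i : Fin m,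
      ((n : ℝ) / (γ : ℝ) < ((B i).card : ℝ)) ∨
      (i.val + 1 = m) ∨
      (∃ h : i.val + 1 < m, (n : ℝ) / (γ : ℝ) < ((B ⟨i.val + 1, h⟩).card : ℝ))) :
    m ≤ 2 * γ := by
  classical
  rcases Nat.eq_zero_or_pos m with hm | hm
  · omega
  set T : Finset (Fin m) :=
    Finset.univ.filter (fun i => (n : ℝ) / (γ : ℝ) < ((B i).card : ℝ)) with hTdef
  -- total cardinality bound
  have hsum : ∑ i ∈ T, (B i).card ≤ n := by
    calc ∑ i ∈ T, (B i).card = (T.biUnion B).card :=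
          (Finset.card_biUnion (fun i _ j _ hij => hdisj i j hij)).symm
      _ ≤ (Finset.univ : Finset (Fin n)).card :=
          Finset.card_le_card (Finset.subset_univ _)
      _ = n := by simp
  have hγpos : (0 : ℝ) < (γ : ℝ) := by exact_mod_cast hγ
  have hnpos : (0 : ℝ) < (n : ℝ) := by exact_mod_cast hn
  -- thick layers are fewer than γ
  have htlt : T.card < γ := by
    by_contra h
    push_neg at h
    have hTne : T.Nonempty := Finset.card_pos.mp (by omega)
    have h1 : ∑ _i ∈ T, (n : ℝ) / (γ : ℝ) < ∑ i ∈ T, ((B i).card : ℝ) :=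
      Finset.sum_lt_sum_of_nonempty hTne
        (fun i hi => (Finset.mem_filter.mp hi).2)
    rw [Finset.sum_const, nsmul_eq_mul] at h1
    have h2 : (∑ i ∈ T, ((B i).card : ℝ)) ≤ (n : ℝ) := by
      exact_mod_cast hsum
    have h3 : (T.card : ℝ) * (n : ℝ) / (γ : ℝ) < (n : ℝ) := by
      rw [mul_div_assoc]; linarith
    have h4 : (T.card : ℝ) * (n : ℝ) < (n : ℝ) * (γ : ℝ) :=
      (div_lt_iff₀ hγpos).mp h3
    have h5 : (γ : ℝ) ≤ (T.card : ℝ) := by exact_mod_cast h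
    nlinarith
  -- counting: m ≤ 2 * T.card + 1
  set N := (Finset.univ : Finset (Fin m)) \ T with hNdef
  have hmN : T.card + N.card = m := by
    have := Finset.card_sdiff_add_card_eq_card (Finset.subset_univ T)
    rw [← hNdef] at this
    simpa [add_comm] using this
  set N2 := N.filter (fun i => i.val + 1 < m) with hN2def
  have hN2 : N2.card ≤ T.card := by
    apply Finset.card_le_card_of_injOn
      (fun i => if h : i.val + 1 < m then (⟨i.val + 1, h⟩ : Fin m) else i)
    · intro i hi
      rw [hN2def, Finset.mem_coe, Finset.mem_filter] at hi
      obtain ⟨hiN, hilt⟩ := hi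
      rw [hNdef, Finset.mem_sdiff, hTdef, Finset.mem_filter] at hiN
      have hnotthick : ¬ ((n : ℝ) / (γ : ℝ) < ((B i).card : ℝ)) := by
        intro hc; exact hiN.2 ⟨Finset.mem_univ _, hc⟩
      rcases hthick i with hc | hc | ⟨h', hc⟩
      · exact absurd hc hnotthick
      · omega
      · simp only [dif_pos hilt]
        exact Finset.mem_filter.mpr ⟨Finset.mem_univ _, hc⟩
    · intro i hi j hj hij
      have hi' : i.val + 1 < m := (Finset.mem_filter.mp hi).2
      have hj' : j.val + 1 < m := (Finset.mem_filter.mp hj).2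
      simp only [dif_pos hi', dif_pos hj'] at hij
      have : i.val + 1 = j.val + 1 := congrArg Fin.val hij
      exact Fin.ext (by omega)
  have hN1 : (N \ N2).card ≤ 1 := by
    apply Finset.card_le_one.mpr
    intro a ha b hb
    rw [Finset.mem_sdiff] at ha hb
    have ha2 : ¬ (a.val + 1 < m) := fun h =>
      ha.2 (Finset.mem_filter.mpr ⟨ha.1, h⟩)
    have hb2 : ¬ (b.val + 1 < m) := fun h =>
      hb.2 (Finset.mem_filter.mpr ⟨hb.1, h⟩)
    have ha' : a.val + 1 = m := by have := a.isLt; omega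
    have hb' : b.val + 1 = m := by have := b.isLt; omega
    exact Fin.ext (by omega)
  have hNcard : N.card ≤ N2.card + 1 := by
    have hsub : N2 ⊆ N := Finset.filter_subset _ _
    have := Finset.card_sdiff_add_card_eq_card hsub
    omega
  omega
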